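/- Let {h^i}_{i=1}^d ⊆ {0,1}^t be a Gray code for d numbers, and let i', i'' ∈ {1,...,d-1} be two indices with |i' - i''| ≥ 2. Then there exists a coordinate j ∈ {1,...,t} such that 1 - h^{i'}_j = 1 - h^{i'+1}_j = h^{i''}_j = h^{i''+1}_j. -/
import Mathlib


/-- A Gray code for `d` numbers: a sequence `h 0, ..., h (d-1)` of pairwise distinct
binary vectors in `{0,1}^t` in which every pair of consecutive vectors differs in
exactly one coordinate. -/
def IsGrayCode (d t : ℕ) (h : ℕ → Fin t → Bool) : Prop :=
  (∀ i j, i < d → j < d → i ≠ j → h i ≠ h j) ∧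
  (∀ i, i + 1 < d → (Finset.univ.filter fun j => h i j ≠ h (i + 1) j).card = 1)

private lemma bool3 : ∀ a b c : Bool, a ≠ b → a ≠ c → b = c := by decide

private lemma bool3' : ∀ a b c : Bool, a ≠ b → b ≠ c → a = c := by decide

/-- If `i'` and `i''` index consecutive pairs of a Gray code with `|i' - i''| ≥ 2`, there
is a coordinate `j` with `1 - h^{i'}_j = 1 - h^{i'+1}_j = h^{i''}_j = h^{i''+1}_j`. -/
theorem gray_code_four_indices (d t : ℕ) (h : ℕ → Fin t → Bool)
    (hg : IsGrayCode d t h) (i' i'' : ℕ) (h1 : i' + 1 < d) (h2 : i'' + 1 < d)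
    (h3 : i' + 2 ≤ i'' ∨ i'' + 2 ≤ i') :
    ∃ j : Fin t, h i' j ≠ h i'' j ∧ h i' j = h (i' + 1) j ∧ h i'' j = h (i'' + 1) j := by
  obtain ⟨hdist, hcons⟩ := hg
  by_contra hc
  push_neg at hc
  obtain ⟨j1, hj1⟩ := Finset.card_eq_one.mp (hcons i' h1)
  obtain ⟨j2, hj2⟩ := Finset.card_eq_one.mp (hcons i'' h2)
  have e1 : ∀ j : Fin t, h i' j ≠ h (i' + 1) j ↔ j = j1 := by
    intro j
    have := Finset.ext_iff.mp hj1 j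
    simpa using this
  have e2 : ∀ j : Fin t, h i'' j ≠ h (i'' + 1) j ↔ j = j2 := by
    intro j
    have := Finset.ext_iff.mp hj2 j
    simpa using this
  have f1 : h i' j1 ≠ h (i' + 1) j1 := (e1 j1).mpr rfl
  have f2 : h i'' j2 ≠ h (i'' + 1) j2 := (e2 j2).mpr rfl
  have g1 : ∀ j : Fin t, j ≠ j1 → h i' j = h (i' + 1) j := fun j hj =>
    not_not.mp ((e1 j).not.mpr hj)
  have g2 : ∀ j : Fin t, j ≠ j2 → h i'' j = h (i'' + 1) j := fun j hj =>
    not_not.mp ((e2 j).not.mpr hj)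
  have agree : ∀ j : Fin t, j ≠ j1 → j ≠ j2 → h i' j = h i'' j := by
    intro j hja hjb
    by_contra hne
    exact ((e2 j).not.mpr hjb) (hc j hne (g1 j hja))
  by_cases hjj : j1 = j2
  · subst hjj
    by_cases hp : h i' j1 = h i'' j1
    · have : h i' = h i'' := by
        funext j
        by_cases hj : j = j1
        · subst hj; exact hp
        · exact agree j hj hj
      exact hdist i' i'' (by omega) (by omega) (by omega) this
    · have : h (i' + 1) = h i'' := by
        funext j
        by_cases hj : j = j1
        · subst hj; exact bool3 (h i' j) (h (i' + 1) j) (h i'' j) f1 hp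
        · exact (g1 j hj).symm.trans (agree j hj hj)
      exact hdist (i' + 1) i'' (by omega) (by omega) (by omega) this
  · by_cases hp : h i' j1 = h i'' j1 <;> by_cases hq : h i' j2 = h i'' j2
    · have : h i' = h i'' := by
        funext j
        by_cases hja : j = j1
        · subst hja; exact hp
        · by_cases hjb : j = j2
          · subst hjb; exact hq
          · exact agree j hja hjb
      exact hdist i' i'' (by omega) (by omega) (by omega) this
    · -- differ only at j2: h (i''+1) = h i'
      have : h (i'' + 1) = h i' := by
        funext j
        by_cases hjb : j = j2
        · subst hjb
          exact bool3 (h i'' j) (h (i'' + 1) j) (h i' j) f2 (fun e => hq e.symm)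
        · by_cases hja : j = j1
          · subst hja
            exact ((g2 j (fun e => hjj e)).symm.trans hp.symm)
          · exact (g2 j hjb).symm.trans (agree j hja hjb).symm
      exact hdist (i'' + 1) i' (by omega) (by omega) (by omega) this
    · -- differ only at j1: h (i'+1) = h i''
      have : h (i' + 1) = h i'' := by
        funext j
        by_cases hja : j = j1
        · subst hja; exact bool3 (h i' j) (h (i' + 1) j) (h i'' j) f1 hp
        · by_cases hjb : j = j2
          · subst hjb; exact (g1 j hja).symm.trans hq
          · exact (g1 j hja).symm.trans (agree j hja hjb)
      exact hdist (i' + 1) i'' (by omega) (by omega) (by omega) this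
    · -- differ at both: h (i'+1) = h (i''+1)
      have : h (i' + 1) = h (i'' + 1) := by
        funext j
        by_cases hja : j = j1
        · subst hja
          have hb : h (i' + 1) j = h i'' j := bool3 (h i' j) (h (i' + 1) j) (h i'' j) f1 hp
          exact hb.trans (g2 j (fun e => hjj e))
        · by_cases hjb : j = j2
          · subst hjb
            have ha : h i' j = h (i'' + 1) j := bool3' (h i' j) (h i'' j) (h (i'' + 1) j) hq f2
            exact (g1 j hja).symm.trans ha
          · exact (g1 j hja).symm.trans ((agree j hja hjb).trans (g2 j hjb))
      exact hdist (i' + 1) (i'' + 1) (by omega) (by omega) (by omega) this
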